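/- Suppose μ is a finite measure on E, f: E → ℝ is measurable, and there exist ε with 0 < ε < 1/3, l ≥ 0, and C > 0 such that μ({x ∈ E : |f(x)| < t}) ≤ C·t^ε·|ln t|^l for all 0 < t < 1/2. Then there is a constant C' such that for all λ ≥ 2, ∫_E min(1, (λ·|f(x)|)^{-1/3}) dμ ≤ C'·λ^{-ε}·(ln λ)^l. -/

import Mathlib

open MeasureTheory

set_option maxHeartbeats 2000000 in
/-- Key computation (5.7)-(5.11) for ε < 1/3: a sublevel set estimate
`μ({|f| < t}) ≤ C t^ε |ln t|^l` implies
`∫ min(1, (λ|f|)^{-1/3}) dμ ≤ C' λ^{-ε} (ln λ)^l` for λ ≥ 2. -/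
theorem stmt_4 {α : Type*} [MeasurableSpace α] (μ : Measure α) [IsFiniteMeasure μ]
    (f : α → ℝ) (hf : Measurable f) (ε : ℝ) (l : ℕ) (C : ℝ)
    (hε : 0 < ε) (hε' : ε < 1 / 3) (hC : 0 < C)
    (hlev : ∀ t : ℝ, 0 < t → t < 1 / 2 →
      (μ {x | |f x| < t}).toReal ≤ C * t ^ ε * |Real.log t| ^ l) :
    ∃ C' > (0 : ℝ), ∀ lam : ℝ, 2 ≤ lam →
      (∫ x, min 1 ((lam * |f x|) ^ (-(1 / 3 : ℝ))) ∂μ) ≤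
        C' * lam ^ (-ε) * (Real.log lam) ^ l := by
  have h2 : (1:ℝ) < 2 := one_lt_two
  set r : ℝ := (2:ℝ) ^ (-(1/3:ℝ)) with hr_def
  have hr_pos : 0 < r := Real.rpow_pos_of_pos two_pos _
  have hr_lt1 : r < 1 := Real.rpow_lt_one_of_one_lt_of_neg h2 (by norm_num)
  set q : ℝ := (2:ℝ) ^ (ε - 1/3) with hq_def
  have hq_pos : 0 < q := Real.rpow_pos_of_pos two_pos _
  have hq_lt1 : q < 1 := Real.rpow_lt_one_of_one_lt_of_neg h2 (by linarith)
  have hq1 : 0 < 1 - q := by linarith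
  set M : ℝ := (μ Set.univ).toReal with hM_def
  have hM0 : 0 ≤ M := ENNReal.toReal_nonneg
  have hlog2 : 0 < Real.log 2 := Real.log_pos h2
  refine ⟨4 * M / (Real.log 2)^l + 2 * C * 2^l * (1-q)⁻¹, by positivity, ?_⟩
  intro lam hlam
  have hlam0 : (0:ℝ) < lam := by linarith
  have hlam1 : (1:ℝ) ≤ lam := by linarith
  set J : ℕ := Nat.log 2 ⌊lam⌋₊ with hJ_def
  have hfl2 : 2 ≤ ⌊lam⌋₊ := Nat.le_floor (by exact_mod_cast hlam)
  have hJ1 : 1 ≤ J := Nat.log_pos (by norm_num) hfl2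
  have hpowJ : ((2:ℝ))^J ≤ lam := by
    have h1 : (2:ℕ)^J ≤ ⌊lam⌋₊ := Nat.pow_log_le_self 2 (by omega)
    have h2' : (⌊lam⌋₊ : ℝ) ≤ lam := Nat.floor_le hlam0.le
    calc ((2:ℝ))^J = (((2:ℕ)^J : ℕ) : ℝ) := by push_cast; ring
      _ ≤ (⌊lam⌋₊ : ℝ) := by exact_mod_cast h1
      _ ≤ lam := h2'
  have hlam_lt : lam < (2:ℝ)^(J+1) := by
    have h1 : ⌊lam⌋₊ < 2^(J+1) := Nat.lt_pow_succ_log_self (by norm_num) _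
    have h2' : lam < (⌊lam⌋₊:ℝ) + 1 := Nat.lt_floor_add_one lam
    have h3 : ((⌊lam⌋₊:ℝ) + 1) ≤ (((2:ℕ)^(J+1) : ℕ) : ℝ) := by exact_mod_cast h1
    calc lam < (⌊lam⌋₊:ℝ) + 1 := h2'
      _ ≤ (((2:ℕ)^(J+1) : ℕ) : ℝ) := h3
      _ = (2:ℝ)^(J+1) := by push_cast; ring
  -- the sets
  set A : ℕ → Set α := fun k => {x | |f x| < (2:ℝ)^k / (2*lam)} with hA_def
  have hA : ∀ k, MeasurableSet (A k) := fun k => measurableSet_lt hf.abs measurable_const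
  -- g and h
  set g : α → ℝ := fun x => min 1 ((lam * |f x|) ^ (-(1 / 3 : ℝ))) with hg_def
  set h : α → ℝ := fun x => 4 * lam ^ (-(1/3:ℝ)) +
      ∑ k ∈ Finset.range J, (A k).indicator (fun _ => 2 * r^k) x with hh_def
  have hg0 : ∀ x, 0 ≤ g x := fun x =>
    le_min zero_le_one (Real.rpow_nonneg (by positivity) _)
  have hg1 : ∀ x, g x ≤ 1 := fun x => min_le_left _ _
  have hgmeas : Measurable g :=
    measurable_const.min ((measurable_const.mul hf.abs).pow measurable_const)
  have hg_int : Integrable g μ := by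
    refine Integrable.mono' (integrable_const (1:ℝ)) hgmeas.aestronglyMeasurable ?_
    filter_upwards with x
    rw [Real.norm_eq_abs, abs_of_nonneg (hg0 x)]; exact hg1 x
  have hind_int : ∀ k ∈ Finset.range J,
      Integrable (fun x => (A k).indicator (fun _ => 2 * r^k) x) μ :=
    fun k _ => (integrable_const _).indicator (hA k)
  have hh_int : Integrable h μ :=
    (integrable_const _).add (integrable_finset_sum _ hind_int)
  -- key antitone step
  have key : ∀ (x : α) (c : ℝ), 0 < c → c ≤ lam * |f x| → g x ≤ c ^ (-(1/3:ℝ)) :=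
    fun x c hc hcx => (min_le_right _ _).trans
      (Real.rpow_le_rpow_of_nonpos hc hcx (by norm_num))
  -- arithmetic lemma 1
  have lem1 : ∀ j : ℕ, 1 ≤ j → ((2:ℝ)^(j-1)/2) ^ (-(1/3:ℝ)) ≤ 2 * r^j := by
    intro j hj
    obtain ⟨m, rfl⟩ : ∃ m, j = m + 1 := ⟨j-1, by omega⟩
    have e0 : m + 1 - 1 = m := rfl
    rw [e0]
    have eL : ((2:ℝ)^m/2) = (2:ℝ)^((m:ℝ)-1) := by
      rw [Real.rpow_sub two_pos, Real.rpow_one, Real.rpow_natCast]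
    have eL2 : ((2:ℝ)^((m:ℝ)-1))^(-(1/3:ℝ)) = (2:ℝ)^(((m:ℝ)-1)*(-(1/3:ℝ))) :=
      (Real.rpow_mul two_pos.le _ _).symm
    have eR : 2 * r^(m+1) = (2:ℝ)^((1:ℝ) + (-(1/3:ℝ))*((m:ℝ)+1)) := by
      rw [Real.rpow_add two_pos, Real.rpow_one, hr_def,
        ← Real.rpow_natCast ((2:ℝ)^(-(1/3:ℝ))) (m+1), ← Real.rpow_mul two_pos.le]
      congr 1
      push_cast; ring
    rw [eL, eL2, eR]
    apply Real.rpow_le_rpow_of_exponent_le one_le_two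
    ring_nf
    linarith
  -- arithmetic lemma 2
  have h8 : ((8:ℝ))^((1/3:ℝ)) = 2 := by
    rw [show (8:ℝ) = 2^(3:ℕ) by norm_num, ← Real.rpow_natCast 2 3,
      ← Real.rpow_mul two_pos.le]
    norm_num
  have lem2 : (lam/8) ^ (-(1/3:ℝ)) ≤ 4 * lam ^ (-(1/3:ℝ)) := by
    have e1 : (lam/8) ^ (-(1/3:ℝ)) = lam ^ (-(1/3:ℝ)) / (8:ℝ) ^ (-(1/3:ℝ)) :=
      Real.div_rpow hlam0.le (by norm_num) _
    have e2 : ((8:ℝ)) ^ (-(1/3:ℝ)) = 2⁻¹ := by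
      rw [Real.rpow_neg (by norm_num), h8]
    rw [e1, e2]
    have : (0:ℝ) ≤ lam ^ (-(1/3:ℝ)) := Real.rpow_nonneg hlam0.le _
    rw [div_eq_mul_inv, inv_inv]
    linarith
  -- pointwise bound
  have hpt : ∀ x, g x ≤ h x := by
    intro x
    have hsum_nonneg : 0 ≤ ∑ k ∈ Finset.range J, (A k).indicator (fun _ => 2 * r^k) x :=
      Finset.sum_nonneg fun k _ => Set.indicator_nonneg
        (fun _ _ => mul_nonneg (by norm_num) (pow_nonneg hr_pos.le k)) x
    by_cases hex : ∃ k, k < J ∧ |f x| < (2:ℝ)^k/(2*lam)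
    · set j := Nat.find hex with hj_def
      obtain ⟨hjJ, hjx⟩ := Nat.find_spec hex
      have hsum_ge : 2 * r^j ≤ h x := by
        have hmem : j ∈ Finset.range J := Finset.mem_range.mpr hjJ
        have hxin : x ∈ A j := hjx
        have e1 : (A j).indicator (fun _ => 2*r^j) x = 2*r^j :=
          Set.indicator_of_mem hxin _
        calc 2*r^j = (A j).indicator (fun _ => 2*r^j) x := e1.symm
          _ ≤ ∑ k ∈ Finset.range J, (A k).indicator (fun _ => 2 * r^k) x :=
            Finset.single_le_sum (fun i _ => Set.indicator_nonneg
              (fun _ _ => mul_nonneg (by norm_num) (pow_nonneg hr_pos.le i)) x) hmem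
          _ ≤ h x := le_add_of_nonneg_left (by positivity)
      rcases Nat.eq_zero_or_pos j with hj0 | hj1
      · have e2 : 2 * r^j = 2 := by rw [hj0]; simp
        have := hg1 x
        linarith
      · have hmin : ¬ ((j - 1) < J ∧ |f x| < (2:ℝ)^(j-1)/(2*lam)) :=
          Nat.find_min hex (by omega)
        have hge : (2:ℝ)^(j-1)/(2*lam) ≤ |f x| := by
          by_contra hcon
          push_neg at hcon
          exact hmin ⟨by omega, hcon⟩
        have hc : (0:ℝ) < (2:ℝ)^(j-1)/2 := by positivity
        have hcx : (2:ℝ)^(j-1)/2 ≤ lam * |f x| := by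
          calc (2:ℝ)^(j-1)/2 = lam * ((2:ℝ)^(j-1)/(2*lam)) := by
                field_simp
              _ ≤ lam * |f x| := by
                exact mul_le_mul_of_nonneg_left hge hlam0.le
        exact (key x _ hc hcx).trans ((lem1 j hj1).trans hsum_ge)
    · push_neg at hex
      have hge : (2:ℝ)^(J-1)/(2*lam) ≤ |f x| := hex (J-1) (by omega)
      have hJe : (2:ℝ)^(J+1) = (2:ℝ)^(J-1) * 4 := by
        rw [show J+1 = (J-1)+2 by omega, pow_add]
        norm_num
      have hcx : lam/8 ≤ lam * |f x| := by
        have h1 : lam/4 ≤ (2:ℝ)^(J-1) := by nlinarith [hlam_lt]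
        calc lam/8 ≤ (2:ℝ)^(J-1)/2 := by linarith
          _ = lam * ((2:ℝ)^(J-1)/(2*lam)) := by field_simp
          _ ≤ lam * |f x| := mul_le_mul_of_nonneg_left hge hlam0.le
      have hgx : g x ≤ (lam/8)^(-(1/3:ℝ)) := key x _ (by positivity) hcx
      calc g x ≤ 4 * lam^(-(1/3:ℝ)) := hgx.trans lem2
        _ ≤ h x := le_add_of_nonneg_right hsum_nonneg
  -- integral of h
  have hint : ∫ x, h x ∂μ
      = M * (4*lam^(-(1/3:ℝ))) + ∑ k ∈ Finset.range J, (μ (A k)).toReal * (2*r^k) := by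
    rw [hh_def]
    rw [integral_add (integrable_const _) (integrable_finset_sum _ hind_int),
      integral_const, integral_finset_sum _ hind_int, smul_eq_mul]
    congr 1
    exact Finset.sum_congr rfl fun k _ => by
      rw [integral_indicator_const _ (hA k), smul_eq_mul]; rfl
  -- geometric sum
  have hsumq : ∑ k ∈ Finset.range J, q^k ≤ (1-q)⁻¹ := by
    rw [← tsum_geometric_of_lt_one hq_pos.le hq_lt1]
    exact Summable.sum_le_tsum _ (fun i _ => by positivity)
      (summable_geometric_of_lt_one hq_pos.le hq_lt1)
  -- term bound
  have hterm : ∀ k ∈ Finset.range J,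
      (μ (A k)).toReal * (2*r^k) ≤ (2 * C * 2^l * (lam^(-ε) * (Real.log lam)^l)) * q^k := by
    intro k hk
    have hkJ : k < J := Finset.mem_range.mp hk
    set t : ℝ := (2:ℝ)^k/(2*lam) with ht_def
    have ht0 : 0 < t := by positivity
    have h2k_lt : (2:ℝ)^k * 2 ≤ lam := by
      have h1 : (2:ℝ)^(k+1) ≤ 2^J := pow_le_pow_right₀ one_le_two (by omega)
      rw [pow_succ] at h1
      linarith
    have ht2 : t < 1/2 := by
      rw [ht_def, div_lt_div_iff₀ (by positivity) (by norm_num)]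
      linarith
    have hmu : (μ (A k)).toReal ≤ C * t ^ ε * |Real.log t| ^ l := hlev t ht0 ht2
    have htε : t ^ ε ≤ ((2:ℝ)^ε)^k * lam^(-ε) := by
      have h1 : t ≤ (2:ℝ)^k/lam := by
        rw [ht_def, div_le_div_iff₀ (by positivity) hlam0]
        nlinarith [pow_pos (two_pos (α := ℝ)) k]
      have h2' : t ^ ε ≤ ((2:ℝ)^k/lam) ^ ε := Real.rpow_le_rpow ht0.le h1 hε.le
      have e : ((2:ℝ)^k/lam) ^ ε = ((2:ℝ)^ε)^k * lam^(-ε) := by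
        rw [Real.div_rpow (by positivity) hlam0.le, Real.rpow_neg hlam0.le, div_eq_mul_inv]
        congr 1
        rw [← Real.rpow_natCast (2:ℝ) k, ← Real.rpow_mul two_pos.le,
          ← Real.rpow_natCast ((2:ℝ)^ε) k, ← Real.rpow_mul two_pos.le]
        congr 1
        ring
      rw [e] at h2'
      exact h2'
    have hlog : |Real.log t| ≤ 2 * Real.log lam := by
      have ht1 : t < 1 := lt_trans ht2 (by norm_num)
      have hneg : Real.log t < 0 := Real.log_neg ht0 ht1
      rw [abs_of_neg hneg, ← Real.log_inv]
      have h1 : (1:ℝ) ≤ (2:ℝ)^k := one_le_pow₀ one_le_two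
      have hinv : t⁻¹ ≤ lam * lam := by
        rw [ht_def, inv_div]
        calc 2*lam/(2:ℝ)^k ≤ 2*lam := div_le_self (by positivity) h1
          _ ≤ lam * lam := by nlinarith
      calc Real.log t⁻¹ ≤ Real.log (lam*lam) := Real.log_le_log (by positivity) hinv
        _ = 2 * Real.log lam := by rw [Real.log_mul hlam0.ne' hlam0.ne']; ring
    have hqk : r^k * ((2:ℝ)^ε)^k = q^k := by
      rw [← mul_pow]
      congr 1
      rw [hr_def, hq_def, ← Real.rpow_add two_pos]
      congr 1
      ring
    have habs : |Real.log t|^l ≤ (2*Real.log lam)^l :=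
      pow_le_pow_left₀ (abs_nonneg _) hlog l
    have hloglam0 : (0:ℝ) ≤ Real.log lam := Real.log_nonneg hlam1
    calc (μ (A k)).toReal * (2*r^k)
        ≤ (C * t^ε * |Real.log t|^l) * (2*r^k) :=
          mul_le_mul_of_nonneg_right hmu (by positivity)
      _ ≤ (C * (((2:ℝ)^ε)^k * lam^(-ε)) * (2*Real.log lam)^l) * (2*r^k) := by
          apply mul_le_mul_of_nonneg_right _ (by positivity)
          apply mul_le_mul (mul_le_mul_of_nonneg_left htε hC.le) habs (by positivity)
          positivity
      _ = (2 * C * 2^l * (lam^(-ε) * (Real.log lam)^l)) * (r^k * ((2:ℝ)^ε)^k) := by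
          rw [mul_pow]
          ring
      _ = (2 * C * 2^l * (lam^(-ε) * (Real.log lam)^l)) * q^k := by rw [hqk]
  -- const bound
  have hconst : M * (4*lam^(-(1/3:ℝ))) ≤ (4*M/(Real.log 2)^l) * lam^(-ε) * (Real.log lam)^l := by
    have h13 : lam^(-(1/3:ℝ)) ≤ lam^(-ε) := Real.rpow_le_rpow_of_exponent_le hlam1 (by linarith)
    have hlogle : (Real.log 2)^l ≤ (Real.log lam)^l :=
      pow_le_pow_left₀ hlog2.le (Real.log_le_log two_pos hlam) l
    have e : 4*M/(Real.log 2)^l * (Real.log 2)^l = 4*M := div_mul_cancel₀ _ (by positivity)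
    have hlamε0 : (0:ℝ) ≤ lam^(-ε) := Real.rpow_nonneg hlam0.le _
    calc M * (4*lam^(-(1/3:ℝ))) ≤ M * (4 * lam^(-ε)) :=
          mul_le_mul_of_nonneg_left (by linarith) hM0
      _ = (4*M/(Real.log 2)^l * (Real.log 2)^l) * lam^(-ε) := by rw [e]; ring
      _ ≤ (4*M/(Real.log 2)^l * (Real.log lam)^l) * lam^(-ε) := by
          apply mul_le_mul_of_nonneg_right _ hlamε0
          exact mul_le_mul_of_nonneg_left hlogle (by positivity)
      _ = (4*M/(Real.log 2)^l) * lam^(-ε) * (Real.log lam)^l := by ring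
  -- assemble
  have hlamε : (0:ℝ) ≤ lam^(-ε) := Real.rpow_nonneg hlam0.le _
  have hloglam : (0:ℝ) ≤ Real.log lam := Real.log_nonneg hlam1
  calc (∫ x, min 1 ((lam * |f x|) ^ (-(1 / 3 : ℝ))) ∂μ)
      ≤ ∫ x, h x ∂μ := integral_mono hg_int hh_int hpt
    _ = M * (4*lam^(-(1/3:ℝ))) + ∑ k ∈ Finset.range J, (μ (A k)).toReal * (2*r^k) := hint
    _ ≤ (4*M/(Real.log 2)^l) * lam^(-ε) * (Real.log lam)^l
        + (2 * C * 2^l * (lam^(-ε) * (Real.log lam)^l)) * ∑ k ∈ Finset.range J, q^k := by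
        refine add_le_add hconst ?_
        rw [Finset.mul_sum]
        exact Finset.sum_le_sum hterm
    _ ≤ (4*M/(Real.log 2)^l) * lam^(-ε) * (Real.log lam)^l
        + (2 * C * 2^l * (lam^(-ε) * (Real.log lam)^l)) * (1-q)⁻¹ :=
        add_le_add_right (mul_le_mul_of_nonneg_left hsumq (by positivity)) _
    _ = (4 * M / (Real.log 2)^l + 2 * C * 2^l * (1-q)⁻¹) * lam ^ (-ε) * (Real.log lam) ^ l := by
        ring
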